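/- Let g ≥ h ≥ 2 be integers. For all sufficiently large n there exists a weak C_h[g]-set A ⊆ [n] (with the condition taken in the group ℤ) such that |A| ≥ (1/8) · n^{(1 - 1/h)(1 - 1/g)(1 + 1/(hg - 1))}. -/

import Mathlib

/-- `A ⊆ Γ` is a weak `C_h[g]`-set: for every `X ⊆ Γ` with `|X| = h` and every set
`K` of `g` distinct elements of `Γ` for which the translates `X + k`, `k ∈ K`, are
pairwise disjoint, at least one translate `X + k` is not contained in `A`. -/
def IsWeakChSet {Γ : Type*} [AddCommGroup Γ] (h g : ℕ) (A : Set Γ) : Prop :=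
  ∀ X : Finset Γ, X.card = h → ∀ K : Finset Γ, K.card = g →
    (∀ k ∈ K, ∀ k' ∈ K, k ≠ k' →
      Disjoint ((fun x => x + k) '' (X : Set Γ)) ((fun x => x + k') '' (X : Set Γ))) →
    ∃ k ∈ K, ¬ (∀ x ∈ X, x + k ∈ A)

lemma card_supersets {α : Type*} [DecidableEq α] (U T : Finset α) (m : ℕ)
    (hTU : T ⊆ U) (hTm : T.card ≤ m) :
    ((U.powersetCard m).filter (fun S => T ⊆ S)).card
      = (U.card - T.card).choose (m - T.card) := by
  classical
  have : ((U.powersetCard m).filter (fun S => T ⊆ S)).card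
      = ((U \ T).powersetCard (m - T.card)).card := by
    apply Finset.card_bij (fun S _ => S \ T)
    · intro S hS
      simp only [Finset.mem_filter, Finset.mem_powersetCard] at hS
      obtain ⟨⟨hSU, hSc⟩, hTS⟩ := hS
      rw [Finset.mem_powersetCard]
      exact ⟨Finset.sdiff_subset_sdiff hSU (le_refl T),
        by rw [Finset.card_sdiff_of_subset hTS, hSc]⟩
    · intro S1 h1 S2 h2 heq
      simp only [Finset.mem_filter, Finset.mem_powersetCard] at h1 h2
      have e1 : S1 = (S1 \ T) ∪ T := by
        rw [Finset.sdiff_union_self_eq_union, Finset.union_eq_left.2 h1.2]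
      have e2 : S2 = (S2 \ T) ∪ T := by
        rw [Finset.sdiff_union_self_eq_union, Finset.union_eq_left.2 h2.2]
      rw [e1, e2, heq]
    · intro R hR
      rw [Finset.mem_powersetCard] at hR
      refine ⟨R ∪ T, ?_, ?_⟩
      · simp only [Finset.mem_filter, Finset.mem_powersetCard]
        have hdisj : Disjoint R T := (Finset.sdiff_disjoint.mono_left hR.1)
        refine ⟨⟨Finset.union_subset (hR.1.trans (Finset.sdiff_subset)) hTU, ?_⟩,
          Finset.subset_union_right⟩
        rw [Finset.card_union_of_disjoint hdisj, hR.2]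
        omega
      · have hdisj : Disjoint R T := (Finset.sdiff_disjoint.mono_left hR.1)
        rw [Finset.union_sdiff_right, Finset.sdiff_eq_self_of_disjoint hdisj]
  rw [this, Finset.card_powersetCard, Finset.card_sdiff_of_subset hTU]


lemma choose_ratio : ∀ (j m n : ℕ), j ≤ m → m ≤ n →
    Nat.choose (n - j) (m - j) * n ^ j ≤ Nat.choose n m * m ^ j := by
  intro j
  induction j with
  | zero => intro m n _ _; simp
  | succ j ih =>
    intro m n hj hm
    have hjm : j < m := hj
    have hjn : j < n := lt_of_lt_of_le hjm hm
    -- identity: (n-j) * C(n-j-1, m-j-1) = C(n-j, m-j) * (m-j)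
    have hid : (n - j) * Nat.choose (n - j - 1) (m - j - 1) = Nat.choose (n - j) (m - j) * (m - j) := by
      have := Nat.add_one_mul_choose_eq (n - j - 1) (m - j - 1)
      have h1 : (n - j - 1) + 1 = n - j := by omega
      have h2 : (m - j - 1) + 1 = m - j := by omega
      rw [h1, h2] at this
      exact this
    have key : Nat.choose (n - (j+1)) (m - (j+1)) * n ^ (j+1) * (m - j)
        ≤ Nat.choose n m * m ^ (j+1) * (m - j) := by
      have e1 : n - (j+1) = n - j - 1 := by omega
      have e2 : m - (j+1) = m - j - 1 := by omega
      rw [e1, e2]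
      calc Nat.choose (n - j - 1) (m - j - 1) * n ^ (j+1) * (m - j)
          = (n * (m - j)) * (Nat.choose (n - j - 1) (m - j - 1) * n ^ j) := by ring
        _ ≤ (m * (n - j)) * (Nat.choose (n - j - 1) (m - j - 1) * n ^ j) := by
            apply Nat.mul_le_mul_right
            have : n * (m - j) ≤ m * (n - j) := by
              have := Nat.mul_le_mul (le_refl j) hm  -- j*m ≤ j*n? fix below
              nlinarith [Nat.sub_add_cancel hjm.le, Nat.sub_add_cancel hjn.le,
                Nat.mul_le_mul_left j hm]
            exact this
        _ = m * n ^ j * ((n - j) * Nat.choose (n - j - 1) (m - j - 1)) := by ring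
        _ = m * n ^ j * (Nat.choose (n - j) (m - j) * (m - j)) := by rw [hid]
        _ = (m * (m - j)) * (Nat.choose (n - j) (m - j) * n ^ j) := by ring
        _ ≤ (m * (m - j)) * (Nat.choose n m * m ^ j) := by
            exact Nat.mul_le_mul_left _ (ih m n hjm.le hm)
        _ = Nat.choose n m * m ^ (j+1) * (m - j) := by ring
    have hpos : 0 < m - j := by omega
    exact Nat.le_of_mul_le_mul_right key hpos

lemma choose_le_pow' : ∀ n k : ℕ, n.choose k ≤ n ^ k := by
  intro n
  induction n with
  | zero => intro k; cases k <;> simp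
  | succ n ih =>
    intro k
    cases k with
    | zero => simp
    | succ k =>
      rw [Nat.choose_succ_succ]
      simp only [Nat.succ_eq_add_one]
      have h1 : n.choose k ≤ n ^ k := ih k
      have h2 : n.choose (k+1) ≤ n ^ (k+1) := ih (k+1)
      have h3 : n ^ k + n ^ (k+1) ≤ (n+1) ^ (k+1) := by
        have he : (n+1) ^ (k+1) = (n+1)^k * (n+1) := by ring
        rw [he]
        have hp : n ^ k ≤ (n+1)^k := Nat.pow_le_pow_left (by omega) k
        calc n ^ k + n ^ (k+1) = n^k * (n+1) := by ring
          _ ≤ (n+1)^k * (n+1) := Nat.mul_le_mul_right _ hp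
      omega

def gridSum (X K : Finset ℤ) : Finset ℤ := K.biUnion fun k => X.image (· + k)

lemma mem_gridSum {X K : Finset ℤ} {a : ℤ} :
    a ∈ gridSum X K ↔ ∃ k ∈ K, ∃ x ∈ X, x + k = a := by
  rw [gridSum, Finset.mem_biUnion]
  simp only [Finset.mem_image]

lemma gridSum_translate (X K : Finset ℤ) (m : ℤ) :
    gridSum (X.image (fun x => x - m)) (K.image (fun k => k + m)) = gridSum X K := by
  ext a
  simp only [mem_gridSum, Finset.mem_image]
  constructor
  · rintro ⟨k', ⟨k, hk, rfl⟩, x', ⟨x, hx, rfl⟩, rfl⟩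
    exact ⟨k, hk, x, hx, by ring⟩
  · rintro ⟨k, hk, x, hx, rfl⟩
    exact ⟨k + m, ⟨k, hk, rfl⟩, x - m, ⟨x, hx, rfl⟩, by ring⟩

def isGridPred (h g : ℕ) (T : Finset ℤ) : Prop :=
  ∃ p : Finset ℤ × Finset ℤ, p.1.card = h ∧ p.2.card = g ∧ gridSum p.1 p.2 = T

open Classical in
noncomputable def gridFam (h g : ℕ) (n : ℤ) : Finset (Finset ℤ) :=
  ((Finset.Icc 1 n).powersetCard (h*g)).filter (isGridPred h g)

noncomputable def mmin (X : Finset ℤ) : ℤ := if hX : X.Nonempty then X.min' hX else 0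

lemma mmin_mem {X : Finset ℤ} (hX : X.Nonempty) : mmin X ∈ X := by
  rw [mmin, dif_pos hX]; exact X.min'_mem hX

lemma mmin_le {X : Finset ℤ} (hX : X.Nonempty) {x : ℤ} (hx : x ∈ X) : mmin X ≤ x := by
  rw [mmin, dif_pos hX]; exact X.min'_le x hx

open Classical in
noncomputable def wit (h g : ℕ) (T : Finset ℤ) : Finset ℤ × Finset ℤ :=
  if hT : isGridPred h g T then hT.choose else (∅, ∅)

lemma wit_spec {h g : ℕ} {T : Finset ℤ} (hT : isGridPred h g T) :
    (wit h g T).1.card = h ∧ (wit h g T).2.card = g ∧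
      gridSum (wit h g T).1 (wit h g T).2 = T := by
  rw [wit, dif_pos hT]; exact hT.choose_spec

noncomputable def normPair (h g : ℕ) (T : Finset ℤ) : Finset ℤ × Finset ℤ :=
  (((wit h g T).1.image (fun x => x - mmin (wit h g T).1)).erase 0,
   (wit h g T).2.image (fun k => k + mmin (wit h g T).1))

lemma normPair_recon {h g : ℕ} (hh : 1 ≤ h) {T : Finset ℤ} (hT : isGridPred h g T) :
    gridSum (insert 0 (normPair h g T).1) (normPair h g T).2 = T := by
  obtain ⟨hX, hK, hsum⟩ := wit_spec hT
  set X := (wit h g T).1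
  set K := (wit h g T).2
  have hXne : X.Nonempty := Finset.card_pos.1 (by omega)
  have h0 : (0:ℤ) ∈ X.image (fun x => x - mmin X) :=
    Finset.mem_image.2 ⟨mmin X, mmin_mem hXne, sub_self _⟩
  have : insert 0 (normPair h g T).1 = X.image (fun x => x - mmin X) := by
    rw [normPair]
    exact Finset.insert_erase h0
  rw [this]
  show gridSum (X.image (fun x => x - mmin X)) (K.image (fun k => k + mmin X)) = T
  rw [gridSum_translate, hsum]

lemma gridFam_card_le {h g : ℕ} (hh : 2 ≤ h) (hg : 2 ≤ g) (n : ℕ) :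
    (gridFam h g n).card ≤ n ^ (h + g - 1) := by
  classical
  have key : (gridFam h g n).card ≤
      ((Finset.Icc (1:ℤ) ((n:ℤ)-1)).powersetCard (h-1) ×ˢ
        (Finset.Icc (1:ℤ) (n:ℤ)).powersetCard g).card := by
    apply Finset.card_le_card_of_injOn (normPair h g)
    · intro T hT
      rw [gridFam, Finset.mem_coe, Finset.mem_filter, Finset.mem_powersetCard] at hT
      obtain ⟨⟨hTsub, hTcard⟩, hiso⟩ := hT
      obtain ⟨hXc, hKc, hsum⟩ := wit_spec hiso
      set X := (wit h g T).1 with hXdef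
      set K := (wit h g T).2 with hKdef
      have hXne : X.Nonempty := Finset.card_pos.1 (by omega)
      have hKne : K.Nonempty := Finset.card_pos.1 (by omega)
      obtain ⟨k₀, hk₀⟩ := hKne
      set m := mmin X with hmdef
      have hmX : m ∈ X := mmin_mem hXne
      have hmk₀ : m + k₀ ∈ T := by
        rw [← hsum]; exact mem_gridSum.2 ⟨k₀, hk₀, m, hmX, rfl⟩
      have hmk₀' := hTsub hmk₀
      rw [Finset.mem_Icc] at hmk₀'
      rw [Finset.mem_coe, Finset.mem_product]
      constructor
      · rw [Finset.mem_powersetCard]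
        constructor
        · intro x' hx'
          rw [normPair] at hx'
          simp only [Finset.mem_erase, Finset.mem_image] at hx'
          obtain ⟨hx'0, x, hx, rfl⟩ := hx'
          have hmx : m ≤ x := mmin_le hXne hx
          have hmm : mmin (wit h g T).1 = m := rfl
          have hxk₀ : x + k₀ ∈ T := by
            rw [← hsum]; exact mem_gridSum.2 ⟨k₀, hk₀, x, hx, rfl⟩
          have hxk₀' := hTsub hxk₀
          rw [Finset.mem_Icc] at hxk₀'
          rw [Finset.mem_Icc]
          omega
        · rw [normPair]
          have himg : (X.image (fun x => x - m)).card = h := by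
            rw [Finset.card_image_of_injective _ (sub_left_injective), hXc]
          have h0 : (0:ℤ) ∈ X.image (fun x => x - m) :=
            Finset.mem_image.2 ⟨m, hmX, sub_self _⟩
          rw [Finset.card_erase_of_mem h0, himg]
      · rw [Finset.mem_powersetCard]
        constructor
        · intro k' hk'
          rw [normPair] at hk'
          simp only [Finset.mem_image] at hk'
          obtain ⟨k, hk, rfl⟩ := hk'
          have : m + k ∈ T := by
            rw [← hsum]; exact mem_gridSum.2 ⟨k, hk, m, hmX, rfl⟩
          have h2 := hTsub this
          have hmm : mmin (wit h g T).1 = m := rfl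
          rw [Finset.mem_Icc] at h2 ⊢
          omega
        · rw [normPair]
          rw [Finset.card_image_of_injective _ (add_left_injective m), hKc]
    · intro T1 hT1 T2 hT2 heq
      simp only [Finset.coe_filter, Set.mem_setOf_eq, gridFam, Finset.mem_coe,
        Finset.mem_filter] at hT1 hT2
      rw [← normPair_recon (by omega : 1 ≤ h) hT1.2,
        ← normPair_recon (by omega : 1 ≤ h) hT2.2, heq]
  rw [Finset.card_product, Finset.card_powersetCard, Finset.card_powersetCard,
    Int.card_Icc, Int.card_Icc] at key
  have e1 : ((n:ℤ) - 1 + 1 - 1).toNat = n - 1 := by omega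
  have e2 : ((n:ℤ) + 1 - 1).toNat = n := by omega
  rw [e1, e2] at key
  calc (gridFam h g n).card ≤ (n-1).choose (h-1) * n.choose g := key
    _ ≤ (n-1)^(h-1) * n^g :=
        Nat.mul_le_mul (choose_le_pow' _ _) (choose_le_pow' _ _)
    _ ≤ n^(h-1) * n^g :=
        Nat.mul_le_mul_right _ (Nat.pow_le_pow_left (by omega) _)
    _ = n ^ (h + g - 1) := by
        rw [← pow_add]
        congr 1
        omega


lemma exists_good (h g : ℕ) (hh : 2 ≤ h) (hg : 2 ≤ g) (n m : ℕ)
    (hm1 : h*g ≤ m) (hm2 : m ≤ n) :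
    ∃ A : Finset ℤ, (A : Set ℤ) ⊆ Set.Icc 1 (n:ℤ) ∧ IsWeakChSet h g (A : Set ℤ) ∧
      ∃ b : ℕ, b * n^(h*g) ≤ n^(h+g-1) * m^(h*g) ∧ m ≤ A.card + b := by
  classical
  set U := Finset.Icc (1:ℤ) (n:ℤ) with hUdef
  have hUcard : U.card = n := by rw [hUdef, Int.card_Icc]; omega
  set P := U.powersetCard m with hPdef
  have hPne : P.Nonempty := Finset.powersetCard_nonempty.2 (by rw [hUcard]; exact hm2)
  set 𝒯 := gridFam h g (n:ℤ) with h𝒯def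
  have h𝒯mem : ∀ T ∈ 𝒯, T ⊆ U ∧ T.card = h*g ∧ isGridPred h g T := by
    intro T hT
    rw [h𝒯def, gridFam, Finset.mem_filter, Finset.mem_powersetCard] at hT
    exact ⟨hT.1.1, hT.1.2, hT.2⟩
  -- the total count over all S
  have hsum : ∑ S ∈ P, (𝒯.filter (fun T => T ⊆ S)).card
      = 𝒯.card * ((n - h*g).choose (m - h*g)) := by
    have e1 : ∀ S ∈ P, (𝒯.filter (fun T => T ⊆ S)).card
        = ∑ T ∈ 𝒯, if T ⊆ S then 1 else 0 := fun S _ => Finset.card_filter _ _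
    rw [Finset.sum_congr rfl e1, Finset.sum_comm]
    have e2 : ∀ T ∈ 𝒯, (∑ S ∈ P, if T ⊆ S then 1 else 0)
        = (n - h*g).choose (m - h*g) := by
      intro T hT
      obtain ⟨hTU, hTc, _⟩ := h𝒯mem T hT
      rw [← Finset.card_filter, hPdef, card_supersets U T m hTU (by omega), hUcard, hTc]
    rw [Finset.sum_congr rfl e2, Finset.sum_const, smul_eq_mul]
  -- pigeonhole: pick a good S
  have hex : ∃ S ∈ P, P.card * (𝒯.filter (fun T => T ⊆ S)).card
      ≤ 𝒯.card * ((n - h*g).choose (m - h*g)) := by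
    apply Finset.exists_le_of_sum_le hPne
    have e3 : ∑ S ∈ P, P.card * (𝒯.filter (fun T => T ⊆ S)).card
        = P.card * (𝒯.card * ((n - h*g).choose (m - h*g))) := by
      rw [← Finset.mul_sum, hsum]
    rw [e3, Finset.sum_const, smul_eq_mul]
  obtain ⟨S, hSP, hSb⟩ := hex
  set Bad := 𝒯.filter (fun T => T ⊆ S) with hBaddef
  set A := S \ Bad.image mmin with hAdef
  have hSU : S ⊆ U ∧ S.card = m := by
    rw [hPdef, Finset.mem_powersetCard] at hSP
    exact ⟨hSP.1, hSP.2⟩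
  have hAS : A ⊆ S := Finset.sdiff_subset
  refine ⟨A, ?_, ?_, Bad.card, ?_, ?_⟩
  · intro a ha
    have : a ∈ U := hSU.1 (hAS ha)
    rw [hUdef, Finset.mem_Icc] at this
    exact Set.mem_Icc.2 this
  · -- weak C_h[g]
    intro X hX K hK hdisj
    by_contra hcon
    push_neg at hcon
    set T := gridSum X K with hTdef
    have hTA : T ⊆ A := by
      intro a ha
      obtain ⟨k, hk, x, hx, rfl⟩ := mem_gridSum.1 ha
      exact hcon k hk x hx
    have hTcard : T.card = h * g := by
      rw [hTdef, gridSum, Finset.card_biUnion]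
      · rw [Finset.sum_congr rfl
          (fun k _ => Finset.card_image_of_injective X (add_left_injective k)),
          Finset.sum_const, smul_eq_mul, hK, hX, Nat.mul_comm]
      · intro k hk k' hk' hne
        rw [Function.onFun, Finset.disjoint_left]
        intro a ha ha'
        obtain ⟨x, hx, rfl⟩ := Finset.mem_image.1 ha
        obtain ⟨x', hx', he⟩ := Finset.mem_image.1 ha'
        have h1 : x + k ∈ (fun x => x + k) '' (X : Set ℤ) := ⟨x, hx, rfl⟩
        have h2 : x + k ∈ (fun x => x + k') '' (X : Set ℤ) := ⟨x', hx', he⟩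
        exact Set.disjoint_left.1 (hdisj k hk k' hk' hne) h1 h2
    have hT𝒯 : T ∈ 𝒯 := by
      rw [h𝒯def, gridFam, Finset.mem_filter, Finset.mem_powersetCard]
      exact ⟨⟨fun a ha => hSU.1 (hAS (hTA ha)), hTcard⟩, ⟨(X, K), hX, hK, rfl⟩⟩
    have hTBad : T ∈ Bad := by
      rw [hBaddef, Finset.mem_filter]
      exact ⟨hT𝒯, fun a ha => hAS (hTA ha)⟩
    have hTne : T.Nonempty := Finset.card_pos.1 (by rw [hTcard]; positivity)
    have hmT : mmin T ∈ A := hTA (mmin_mem hTne)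
    rw [hAdef, Finset.mem_sdiff] at hmT
    exact hmT.2 (Finset.mem_image.2 ⟨T, hTBad, rfl⟩)
  · -- the count bound
    have hPpos : 0 < P.card := Finset.card_pos.2 hPne
    have hPcard : P.card = n.choose m := by rw [hPdef, Finset.card_powersetCard, hUcard]
    have hratio := choose_ratio (h*g) m n hm1 hm2
    have key : P.card * (Bad.card * n^(h*g)) ≤ P.card * (𝒯.card * m^(h*g)) := by
      calc P.card * (Bad.card * n^(h*g)) = (P.card * Bad.card) * n^(h*g) := by ring
        _ ≤ (𝒯.card * ((n - h*g).choose (m - h*g))) * n^(h*g) :=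
            Nat.mul_le_mul_right _ hSb
        _ = 𝒯.card * ((n - h*g).choose (m - h*g) * n^(h*g)) := by ring
        _ ≤ 𝒯.card * (n.choose m * m^(h*g)) := Nat.mul_le_mul_left _ hratio
        _ = P.card * (𝒯.card * m^(h*g)) := by rw [hPcard]; ring
    have key2 : Bad.card * n^(h*g) ≤ 𝒯.card * m^(h*g) :=
      Nat.le_of_mul_le_mul_left key hPpos
    calc Bad.card * n^(h*g) ≤ 𝒯.card * m^(h*g) := key2
      _ ≤ n^(h+g-1) * m^(h*g) :=
          Nat.mul_le_mul_right _ (gridFam_card_le hh hg n)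
  · -- m ≤ A.card + Bad.card
    have h1 : S ⊆ A ∪ Bad.image mmin := by
      intro a ha
      rw [Finset.mem_union, hAdef, Finset.mem_sdiff]
      by_cases hmem : a ∈ Bad.image mmin
      · exact Or.inr hmem
      · exact Or.inl ⟨ha, hmem⟩
    calc m = S.card := hSU.2.symm
      _ ≤ (A ∪ Bad.image mmin).card := Finset.card_le_card h1
      _ ≤ A.card + (Bad.image mmin).card := Finset.card_union_le _ _
      _ ≤ A.card + Bad.card := by
          exact Nat.add_le_add_left (Finset.card_image_le) _

theorem stmt10 (g h : ℕ) (hh : 2 ≤ h) (hgh : h ≤ g) :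
    ∃ N : ℕ, ∀ n : ℕ, N ≤ n → ∃ A : Finset ℤ,
      (A : Set ℤ) ⊆ Set.Icc 1 (n : ℤ) ∧ IsWeakChSet h g (A : Set ℤ) ∧
      (1 / 8 : ℝ) * (n : ℝ) ^
          ((1 - (1 : ℝ) / h) * (1 - (1 : ℝ) / g) * (1 + 1 / ((h : ℝ) * g - 1)))
        ≤ (A.card : ℝ) := by
  have hg : 2 ≤ g := le_trans hh hgh
  have hh2 : (2:ℝ) ≤ (h:ℝ) := by exact_mod_cast hh
  have hg2 : (2:ℝ) ≤ (g:ℝ) := by exact_mod_cast hg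
  have hd0 : (0:ℝ) < (h:ℝ)*(g:ℝ) - 1 := by nlinarith
  set β : ℝ := ((h:ℝ)-1)*((g:ℝ)-1)/((h:ℝ)*(g:ℝ)-1) with hβdef
  have hβpos : 0 < β := div_pos (by nlinarith) hd0
  have hβ1 : β ≤ 1 := by
    rw [div_le_one hd0]; nlinarith
  have hne : (h:ℝ) ≠ 0 := by positivity
  have gne : (g:ℝ) ≠ 0 := by positivity
  have dne : (h:ℝ)*(g:ℝ) - 1 ≠ 0 := ne_of_gt hd0
  have hexp : (1 - (1 : ℝ) / h) * (1 - (1 : ℝ) / g) * (1 + 1 / ((h : ℝ) * g - 1)) = β := by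
    rw [hβdef]; field_simp; ring
  have hev := (tendsto_rpow_atTop hβpos).eventually_ge_atTop (4*((h:ℝ)*g))
  rw [Filter.eventually_atTop] at hev
  obtain ⟨C, hC⟩ := hev
  refine ⟨⌈C⌉₊ + 1, fun n hn => ?_⟩
  have hn1 : 1 ≤ n := by omega
  have hn1R : (1:ℝ) ≤ (n:ℝ) := by exact_mod_cast hn1
  have hnC : C ≤ (n:ℝ) := le_trans (Nat.le_ceil C) (by exact_mod_cast Nat.le_of_succ_le hn)
  have hx4 : 4*((h:ℝ)*g) ≤ (n:ℝ)^β := hC n hnC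
  set x := (n:ℝ)^β with hxdef
  have hx16 : (16:ℝ) ≤ x := by nlinarith
  set m := ⌈x/4⌉₊ with hmdef
  have hm_lb : x/4 ≤ (m:ℝ) := Nat.le_ceil _
  have hm_ub : (m:ℝ) ≤ x/2 := by
    have := Nat.ceil_lt_add_one (by positivity : (0:ℝ) ≤ x/4)
    rw [← hmdef] at this
    linarith
  have hm1 : h*g ≤ m := by
    have : ((h*g : ℕ):ℝ) ≤ (m:ℝ) := by push_cast; nlinarith
    exact_mod_cast this
  have hxn : x ≤ (n:ℝ) := by
    calc x = (n:ℝ)^β := hxdef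
      _ ≤ (n:ℝ)^(1:ℝ) := Real.rpow_le_rpow_of_exponent_le hn1R hβ1
      _ = (n:ℝ) := Real.rpow_one _
  have hm2 : m ≤ n := by
    have : (m:ℝ) ≤ (n:ℝ) := by linarith
    exact_mod_cast this
  obtain ⟨A, hA1, hA2, b, hb, hcard⟩ := exists_good h g hh hg n m hm1 hm2
  refine ⟨A, hA1, hA2, ?_⟩
  rw [hexp, ← hxdef]
  -- now bound b
  have hnpos : (0:ℝ) < (n:ℝ) := by linarith
  have hbR : (b:ℝ) * (n:ℝ)^(h*g) ≤ (n:ℝ)^(h+g-1) * (m:ℝ)^(h*g) := by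
    exact_mod_cast hb
  have hxpos : (0:ℝ) < x := by linarith
  have hmnn : (0:ℝ) ≤ (m:ℝ) := Nat.cast_nonneg m
  have e : (n:ℝ)^(h+g-1) * x^(h*g) = (n:ℝ)^(h*g) * x := by
    rw [← Real.rpow_natCast (n:ℝ) (h+g-1), hxdef, ← Real.rpow_natCast ((n:ℝ)^β) (h*g),
      ← Real.rpow_natCast (n:ℝ) (h*g),
      ← Real.rpow_mul (le_of_lt hnpos), ← Real.rpow_add hnpos, ← Real.rpow_add hnpos]
    congr 1
    have hcast : ((h+g-1:ℕ):ℝ) = (h:ℝ)+(g:ℝ)-1 := by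
      rw [Nat.cast_sub (by omega : 1 ≤ h+g)]; push_cast; ring
    rw [hcast]
    push_cast
    have hβd : β * ((h:ℝ)*(g:ℝ) - 1) = ((h:ℝ)-1)*((g:ℝ)-1) := by
      rw [hβdef]; field_simp
    linear_combination hβd
  have step1 : (n:ℝ)^(h+g-1) * (m:ℝ)^(h*g) ≤ (n:ℝ)^(h+g-1) * (x/2)^(h*g) := by
    apply mul_le_mul_of_nonneg_left (pow_le_pow_left₀ hmnn hm_ub _) (by positivity)
  have step2 : (n:ℝ)^(h+g-1) * (x/2)^(h*g) = (n:ℝ)^(h*g) * (x * (1/2)^(h*g)) := by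
    have : (x/2)^(h*g) = x^(h*g) * (1/2)^(h*g) := by
      rw [← mul_pow]; ring_nf
    rw [this, ← mul_assoc, e]
    ring
  have hbR2 : (b:ℝ) ≤ x * (1/2)^(h*g) := by
    have hnp : (0:ℝ) < (n:ℝ)^(h*g) := by positivity
    have : (b:ℝ) * (n:ℝ)^(h*g) ≤ ((n:ℝ)^(h*g)) * (x * (1/2)^(h*g)) := by
      calc (b:ℝ) * (n:ℝ)^(h*g) ≤ (n:ℝ)^(h+g-1) * (m:ℝ)^(h*g) := hbR
        _ ≤ (n:ℝ)^(h+g-1) * (x/2)^(h*g) := step1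
        _ = ((n:ℝ)^(h*g)) * (x * (1/2)^(h*g)) := step2
    have h' : (b:ℝ) * (n:ℝ)^(h*g) ≤ (x * (1/2)^(h*g)) * (n:ℝ)^(h*g) := by linarith
    exact le_of_mul_le_mul_right h' hnp
  have hhg4 : 4 ≤ h*g := by nlinarith
  have hhalf : ((1:ℝ)/2)^(h*g) ≤ (1/2)^4 :=
    pow_le_pow_of_le_one (by norm_num) (by norm_num) hhg4
  have hb16 : (b:ℝ) ≤ x/16 := by
    have : x * (1/2)^(h*g) ≤ x * (1/16) := by
      apply mul_le_mul_of_nonneg_left _ (le_of_lt hxpos)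
      norm_num at hhalf ⊢
      linarith
    linarith
  have hcardR : (m:ℝ) ≤ (A.card:ℝ) + (b:ℝ) := by exact_mod_cast hcard
  linarith
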